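/- Let f ∈ ℤ[X] be a primitive polynomial and let p_1, …, p_m be distinct primes not dividing the leading coefficient of f. For each prime p_k, write the reduction of f modulo p_k as a product of irreducible polynomials in F_{p_k}[X], let D_{p_k} be the tuple of their degrees, and let S(D_{p_k}) be the set of all subset sums of D_{p_k}. Let d = min ( ⋂_{k=1}^{m} S(D_{p_k}) \ {0} ). If a ∈ ℤ[X] divides f and a is neither 1 nor −1, then d ≤ deg a. -/

import Mathlib

open Polynomial

lemma aux_dvd_prod_irred {F : Type*} [Field F] {ι : Type*} [DecidableEq ι]
    (g : ι → Polynomial F) (hirr : ∀ i, Irreducible (g i))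
    (T : Finset ι) (q : Polynomial F) (hq : q ∣ ∏ i ∈ T, g i) :
    ∃ S ⊆ T, q.natDegree = ∑ i ∈ S, (g i).natDegree := by
  induction T using Finset.induction_on generalizing q with
  | empty =>
      simp only [Finset.prod_empty] at hq
      exact ⟨∅, le_refl _, by simpa using natDegree_eq_zero_of_isUnit (isUnit_of_dvd_one hq)⟩
  | @insert b T hb ih =>
      rw [Finset.prod_insert hb] at hq
      obtain ⟨q1, q2, h1, h2, rfl⟩ := exists_dvd_and_dvd_of_dvd_mul hq
      obtain ⟨S, hS, hd2⟩ := ih q2 h2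
      have hq1 : q1 ≠ 0 := by
        rintro rfl; simp at h1; exact (hirr b).ne_zero h1
      have hq2 : q2 ≠ 0 := by
        rintro rfl
        exact Finset.prod_ne_zero_iff.2 (fun i _ => (hirr i).ne_zero) (zero_dvd_iff.mp h2)
      rw [natDegree_mul hq1 hq2]
      obtain ⟨c, hc⟩ := h1
      rcases (hirr b).isUnit_or_isUnit hc with h | h
      · exact ⟨S, hS.trans (Finset.subset_insert b T),
          by rw [natDegree_eq_zero_of_isUnit h, zero_add, hd2]⟩
      · refine ⟨insert b S, Finset.insert_subset_insert b hS, ?_⟩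
        have hbS : b ∉ S := fun h => hb (hS h)
        rw [Finset.sum_insert hbS, ← hd2, hc, natDegree_mul (fun h0 => hq1 (by simp [h0, hc]))
          (IsUnit.ne_zero h), natDegree_eq_zero_of_isUnit h, add_zero]

/-- **Degree analysis.** Let `f : ℤ[X]` be primitive, and `p 1, …, p m` distinct primes
not dividing the leading coefficient of `f`. Suppose the reduction of `f` modulo `p k`
factors into irreducibles `g k 1, …, g k (t k)` over `F_(p k)`. Let `d` be the least
element of the intersection over `k` of the sets of nonzero subset sums of the degrees
of the `g k i`. If `a ∣ f` and `a` is neither `1` nor `-1`, then `d ≤ deg a`. -/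
theorem min_subset_sum_le_natDegree_of_dvd
    (f : Polynomial ℤ) (hf : f.IsPrimitive)
    (m : ℕ) (p : Fin m → ℕ) (hp : ∀ k, (p k).Prime)
    (hdist : Function.Injective p)
    (hlc : ∀ k, ¬ ((p k : ℤ) ∣ f.leadingCoeff))
    (t : Fin m → ℕ) (g : (k : Fin m) → Fin (t k) → Polynomial (ZMod (p k)))
    (hirr : ∀ k i, Irreducible (g k i))
    (hfac : ∀ k, f.map (Int.castRingHom (ZMod (p k))) = ∏ i, g k i)
    (d : ℕ)
    (hd : IsLeast
      ({ c | ∀ k, ∃ S : Finset (Fin (t k)), c = ∑ i ∈ S, (g k i).natDegree } \ {0}) d)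
    (a : Polynomial ℤ) (ha : a ∣ f) (ha1 : a ≠ 1) (haneg : a ≠ -1) :
    d ≤ a.natDegree := by
  have hfne : f ≠ 0 := hf.ne_zero
  have hane : a ≠ 0 := fun h => hfne (by simpa [h] using ha)
  have hdeg : a.natDegree ≠ 0 := by
    intro h0
    obtain ⟨c, rfl⟩ := natDegree_eq_zero.mp h0
    have := hf c (by simpa using ha)
    rcases Int.isUnit_iff.mp this with h | h
    · exact ha1 (by rw [h]; simp)
    · exact haneg (by rw [h]; simp)
  obtain ⟨b, hb⟩ := ha
  have hlca : a.leadingCoeff ∣ f.leadingCoeff := ⟨b.leadingCoeff, by rw [hb, leadingCoeff_mul]⟩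
  refine hd.2 ⟨fun k => ?_, hdeg⟩
  haveI : Fact (p k).Prime := ⟨hp k⟩
  set φ := Int.castRingHom (ZMod (p k))
  have hmapdvd : a.map φ ∣ ∏ i, g k i := by
    rw [← hfac k]; exact Polynomial.map_dvd φ ⟨b, hb⟩
  have hlne : φ a.leadingCoeff ≠ 0 := by
    intro h
    exact hlc k (dvd_trans ((ZMod.intCast_zmod_eq_zero_iff_dvd _ _).mp h) hlca)
  have hdegmap : (a.map φ).natDegree = a.natDegree :=
    natDegree_map_of_leadingCoeff_ne_zero φ hlne
  obtain ⟨S, _, hS⟩ := aux_dvd_prod_irred (g k) (hirr k) Finset.univ (a.map φ) hmapdvd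
  exact ⟨S, by rw [← hdegmap, hS]⟩
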